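/- Let k ≥ 1 and θ ≤ k/2, set r' = 1/2 − θ, and let ℓ(x,y,w) = [1/2 − y(⟨w,x⟩ − θ)]₊. There exists a distribution D over {0,1}^{k²+1} × {±1} with P[Y = −1] = 1 and min_{w ∈ H} E_D[ℓ(X,Y,w)] = [r']₊ (where H = {w ∈ ℝ_+^{k²+1} : ‖w‖₁ ≤ k}), such that with probability at least 1/2 over samples S ~ D^m, there exists w ∈ H with |Ê_S[ℓ(·,·,w)] − E_D[ℓ(·,·,w)]| ≥ Ω(sqrt(k²/m)). -/

import Mathlib

open MeasureTheory Finset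

lemma central_sq (n : ℕ) : (Nat.centralBinom n)^2 * (3*n+1) ≤ 16^n := by
  induction n with
  | zero => simp [Nat.centralBinom]
  | succ n ih =>
    have key := Nat.succ_mul_centralBinom_succ n
    have hpos : 0 < (n+1)^2 * (3*n+1) := by positivity
    refine Nat.le_of_mul_le_mul_left ?_ hpos
    calc (n+1)^2 * (3*n+1) * ((Nat.centralBinom (n+1))^2 * (3*(n+1)+1))
        = (3*n+1) * (3*n+4) * ((n+1) * Nat.centralBinom (n+1))^2 := by ring
      _ = (3*n+1) * (3*n+4) * (2*(2*n+1) * Nat.centralBinom n)^2 := by rw [key]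
      _ = (4*(2*n+1)^2*(3*n+4)) * ((Nat.centralBinom n)^2 * (3*n+1)) := by ring
      _ ≤ (4*(2*n+1)^2*(3*n+4)) * 16^n := Nat.mul_le_mul_left _ ih
      _ ≤ ((n+1)^2 * (3*n+1) * 16) * 16^n := by
          apply Nat.mul_le_mul_right; nlinarith
      _ = (n+1)^2 * (3*n+1) * 16^(n+1) := by ring

lemma middle_sq (m : ℕ) : (m.choose (m/2))^2 * (m+1) ≤ 4^m := by
  rcases Nat.even_or_odd m with ⟨n, hn⟩ | ⟨n, hn⟩
  · subst hn
    have h2 : (n+n)/2 = n := by omega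
    rw [h2]
    have hC : (n+n).choose n = Nat.centralBinom n := by
      rw [Nat.centralBinom_eq_two_mul_choose, two_mul]
    rw [hC]
    calc (Nat.centralBinom n)^2 * (n+n+1) ≤ (Nat.centralBinom n)^2 * (3*n+1) :=
          Nat.mul_le_mul_left _ (by omega)
      _ ≤ 16^n := central_sq n
      _ ≤ 4^(n+n) := by
          rw [show (16:ℕ) = 4^2 by norm_num, ← pow_mul]
          exact Nat.pow_le_pow_right (by norm_num) (by omega)
  · subst hn
    have h2 : (2*n+1)/2 = n := by omega
    rw [h2]
    have hle : (2*n+1).choose n ≤ 2 * Nat.centralBinom n := by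
      have hs : (2*n+1).choose n = (2*n+1).choose (n+1) := by
        simpa [show 2*n+1-(n+1) = n by omega] using
          Nat.choose_symm (n := 2*n+1) (k := n+1) (by omega)
      have hps : (2*n+1).choose (n+1) = (2*n).choose n + (2*n).choose (n+1) :=
        Nat.choose_succ_succ (2*n) n
      have h3 : (2*n).choose (n+1) ≤ (2*n).choose n := by
        simpa [show (2*n)/2 = n by omega] using Nat.choose_le_middle (n+1) (2*n)
      have hcb : Nat.centralBinom n = (2*n).choose n := Nat.centralBinom_eq_two_mul_choose n
      omega
    rcases Nat.eq_zero_or_pos n with rfl | hn1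
    · norm_num
    · calc ((2*n+1).choose n)^2 * (2*n+1+1)
          ≤ (2 * Nat.centralBinom n)^2 * (2*n+2) :=
            Nat.mul_le_mul_right _ (Nat.pow_le_pow_left hle 2)
        _ = 4 * ((Nat.centralBinom n)^2 * (2*n+2)) := by ring
        _ ≤ 4 * ((Nat.centralBinom n)^2 * (3*n+1)) :=
            Nat.mul_le_mul_left _ (Nat.mul_le_mul_left _ (by omega))
        _ ≤ 4 * 16^n := Nat.mul_le_mul_left _ (central_sq n)
        _ = 4^(2*n+1) := by
            rw [show (16:ℕ) = 4^2 by norm_num, ← pow_mul]; ring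

lemma middle_le (m : ℕ) (hm : 1 ≤ m) : m.choose (m/2) ≤ 2^(m-1) := by
  induction m with
  | zero => omega
  | succ m ih =>
    rcases Nat.eq_zero_or_pos m with rfl | hm1
    · simp
    obtain ⟨t, ht⟩ : ∃ t, (m+1)/2 = t + 1 := ⟨(m+1)/2 - 1, by omega⟩
    rw [ht, Nat.choose_succ_succ]
    have h1 : m.choose t ≤ m.choose (m/2) := Nat.choose_le_middle t m
    have h2 : m.choose (t+1) ≤ m.choose (m/2) := Nat.choose_le_middle (t+1) m
    have h3 := ih hm1
    calc m.choose t + m.choose (t+1) ≤ 2^(m-1) + 2^(m-1) := by omega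
      _ = 2^m := by rw [← two_mul, ← pow_succ']; congr 1; omega
      _ = 2^(m+1-1) := by norm_num

lemma card_count_eq (m j : ℕ) :
    (Finset.univ.filter fun b : Fin m → Bool =>
      (Finset.univ.filter fun i => b i = true).card = j).card = m.choose j := by
  have : m.choose j = ((Finset.univ : Finset (Fin m)).powersetCard j).card := by
    rw [Finset.card_powersetCard, Finset.card_univ, Fintype.card_fin]
  rw [this]
  apply Finset.card_bij (fun b _ => Finset.univ.filter fun i => b i = true)
  · intro b hb
    simp only [Finset.mem_filter, Finset.mem_univ, true_and] at hb
    simp [Finset.mem_powersetCard, hb]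
  · intro b₁ h₁ b₂ h₂ heq
    funext i
    have := Finset.ext_iff.mp heq i
    simp only [Finset.mem_filter, Finset.mem_univ, true_and] at this
    rcases Bool.eq_false_or_eq_true (b₁ i) with h | h <;>
      rcases Bool.eq_false_or_eq_true (b₂ i) with h' | h' <;> simp_all
  · intro s hs
    simp only [Finset.mem_powersetCard] at hs
    refine ⟨fun i => decide (i ∈ s), ?_, ?_⟩
    · simp only [Finset.mem_filter, Finset.mem_univ, true_and]
      rw [show (Finset.univ.filter fun i => decide (i ∈ s) = true) = s by ext i; simp]
      exact hs.2
    · ext i; simp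

lemma count_main (m : ℕ) (hm : 1 ≤ m) :
    (Finset.univ.filter fun b : Fin m → Bool =>
      16*((2*(((Finset.univ.filter fun i => b i = true).card : ℤ)) - m)^2) < m).card
      ≤ 2^(m-1) := by
  classical
  set cnt : (Fin m → Bool) → ℕ := fun b => (Finset.univ.filter fun i => b i = true).card with hcnt
  set T : Finset ℕ := (Finset.range (m+1)).filter (fun j => 16*((2*(j:ℤ) - m)^2) < m) with hT
  set C : ℕ := m.choose (m/2) with hC
  have hcntle : ∀ b : Fin m → Bool, cnt b ≤ m := by
    intro b
    calc cnt b ≤ (Finset.univ : Finset (Fin m)).card := Finset.card_filter_le _ _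
      _ = m := by simp
  have hsplit : (Finset.univ.filter fun b : Fin m → Bool =>
      16*((2*((cnt b : ℤ)) - m)^2) < m).card = ∑ j ∈ T, ((Finset.univ.filter fun b : Fin m → Bool =>
      16*((2*((cnt b : ℤ)) - m)^2) < m).filter fun b => cnt b = j).card := by
    apply Finset.card_eq_sum_card_fiberwise
    intro b hb
    simp only [Finset.coe_filter, Set.mem_setOf_eq, Finset.mem_coe, Finset.mem_filter, Finset.mem_univ, true_and] at hb
    simp only [hT, Finset.coe_filter, Set.mem_setOf_eq, Finset.mem_coe, Finset.mem_filter, Finset.mem_range]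
    exact ⟨by have := hcntle b; omega, hb⟩
  have hfiber : ∀ j, ((Finset.univ.filter fun b : Fin m → Bool =>
      16*((2*((cnt b : ℤ)) - m)^2) < m).filter fun b => cnt b = j).card ≤ m.choose j := by
    intro j
    rw [← card_count_eq m j]
    apply Finset.card_le_card
    intro b hb
    simp only [Finset.mem_filter, Finset.mem_univ, true_and] at hb ⊢
    exact hb.2
  have hchoose : ∀ j, m.choose j ≤ C := fun j => Nat.choose_le_middle j m
  have hmain : (Finset.univ.filter fun b : Fin m → Bool =>
      16*((2*((cnt b : ℤ)) - m)^2) < m).card ≤ T.card * C := by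
    rw [hsplit]
    calc ∑ j ∈ T, ((Finset.univ.filter fun b : Fin m → Bool =>
          16*((2*((cnt b : ℤ)) - m)^2) < m).filter fun b => cnt b = j).card
        ≤ ∑ j ∈ T, C := Finset.sum_le_sum (fun j _ => (hfiber j).trans (hchoose j))
      _ = T.card * C := by rw [Finset.sum_const, smul_eq_mul]
  rcases lt_or_ge m 16 with hm16 | hm16
  · have hTsub : T ⊆ {m/2} := by
      intro j hj
      simp only [hT, Finset.mem_filter, Finset.mem_range] at hj
      have h2 : (2*(j:ℤ) - m)^2 = 0 := by nlinarith [sq_nonneg (2*(j:ℤ) - m), hj.2]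
      have : 2*(j:ℤ) = m := by nlinarith [sq_nonneg (2*(j:ℤ) - m)]
      simp only [Finset.mem_singleton]
      omega
    have : T.card ≤ 1 := by
      calc T.card ≤ ({m/2} : Finset ℕ).card := Finset.card_le_card hTsub
        _ = 1 := Finset.card_singleton _
    calc (Finset.univ.filter fun b : Fin m → Bool =>
        16*((2*((cnt b : ℤ)) - m)^2) < m).card ≤ T.card * C := hmain
      _ ≤ 1 * C := Nat.mul_le_mul_right _ this
      _ = C := one_mul _
      _ ≤ 2^(m-1) := middle_le m hm
  · rcases Finset.eq_empty_or_nonempty T with hTe | hTne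
    · refine hmain.trans ?_; rw [hTe]; simp
    have hsm : (4:ℝ) ≤ Real.sqrt m := by
      rw [show (4:ℝ) = Real.sqrt 16 by
        rw [show (16:ℝ) = 4^2 by norm_num, Real.sqrt_sq]; norm_num]
      exact Real.sqrt_le_sqrt (by exact_mod_cast hm16)
    have hsmpos : (0:ℝ) < Real.sqrt m := by linarith
    have hTbound : ∀ j ∈ T, |2*(j:ℝ) - m| < Real.sqrt m / 4 := by
      intro j hj
      simp only [hT, Finset.mem_filter, Finset.mem_range] at hj
      have h2 : 16*((2*(j:ℝ) - m)^2) < m := by exact_mod_cast hj.2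
      have h3 : (4 * |2*(j:ℝ) - m|)^2 < (m:ℝ) := by
        calc (4 * |2*(j:ℝ) - m|)^2 = 16*((2*(j:ℝ) - m)^2) := by
              rw [mul_pow, sq_abs]; norm_num
          _ < (m:ℝ) := h2
      have h4 : 4 * |2*(j:ℝ) - m| < Real.sqrt m := by
        exact (Real.lt_sqrt (by positivity)).mpr h3
      linarith
    have hTcard : (T.card : ℝ) ≤ Real.sqrt m / 4 + 1 := by
      set j₀ := T.min' hTne
      set j₁ := T.max' hTne
      have hsub : T ⊆ Finset.Icc j₀ j₁ := fun j hj =>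
        Finset.mem_Icc.mpr ⟨T.min'_le j hj, T.le_max' j hj⟩
      have hcard : T.card ≤ j₁ - j₀ + 1 := by
        calc T.card ≤ (Finset.Icc j₀ j₁).card := Finset.card_le_card hsub
          _ = j₁ + 1 - j₀ := Nat.card_Icc _ _
          _ ≤ j₁ - j₀ + 1 := by omega
      have hj0 := hTbound j₀ (T.min'_mem hTne)
      have hj1 := hTbound j₁ (T.max'_mem hTne)
      have hle : j₀ ≤ j₁ := T.min'_le _ (T.max'_mem hTne)
      have hdiff : ((j₁ - j₀ : ℕ) : ℝ) < Real.sqrt m / 4 := by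
        rw [Nat.cast_sub hle]
        have h5 : 2*(j₁:ℝ) - 2*(j₀:ℝ) ≤ |2*(j₁:ℝ) - m| + |2*(j₀:ℝ) - m| := by
          have h6 : (2*(j₁:ℝ) - m) - (2*(j₀:ℝ) - m) ≤ |(2*(j₁:ℝ) - m) - (2*(j₀:ℝ) - m)| :=
            le_abs_self _
          calc 2*(j₁:ℝ) - 2*(j₀:ℝ) = (2*(j₁:ℝ) - m) - (2*(j₀:ℝ) - m) := by ring
            _ ≤ |(2*(j₁:ℝ) - m) - (2*(j₀:ℝ) - m)| := h6
            _ ≤ |2*(j₁:ℝ) - m| + |2*(j₀:ℝ) - m| := abs_sub _ _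
        linarith
      calc (T.card : ℝ) ≤ ((j₁ - j₀ + 1 : ℕ) : ℝ) := by exact_mod_cast hcard
        _ = ((j₁ - j₀ : ℕ) : ℝ) + 1 := by push_cast; ring
        _ ≤ Real.sqrt m / 4 + 1 := by linarith
    have hCreal : (C:ℝ) * Real.sqrt m ≤ 2^m := by
      have h1 : ((C:ℝ))^2 * (m+1) ≤ 4^m := by
        have := middle_sq m
        have : (((m.choose (m/2))^2 * (m+1) : ℕ) : ℝ) ≤ ((4^m : ℕ) : ℝ) := by exact_mod_cast this
        push_cast at this
        convert this using 2
      have h2 : ((C:ℝ) * Real.sqrt m)^2 ≤ (2^m : ℝ)^2 := by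
        rw [mul_pow, Real.sq_sqrt (by positivity)]
        calc (C:ℝ)^2 * m ≤ (C:ℝ)^2 * (m+1) := by nlinarith [sq_nonneg (C:ℝ)]
          _ ≤ 4^m := h1
          _ = (2^m : ℝ)^2 := by rw [show (4:ℝ) = 2^2 by norm_num, ← pow_mul, ← pow_mul, mul_comm]
      have h3 : (0:ℝ) ≤ (C:ℝ) * Real.sqrt m := by positivity
      nlinarith [h2, h3, pow_pos (show (0:ℝ) < 2 by norm_num) m]
    have hfinal : ((Finset.univ.filter fun b : Fin m → Bool =>
        16*((2*((cnt b : ℤ)) - m)^2) < m).card : ℝ) ≤ 2^(m-1) := by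
      have hCnn : (0:ℝ) ≤ C := Nat.cast_nonneg _
      calc ((Finset.univ.filter fun b : Fin m → Bool =>
          16*((2*((cnt b : ℤ)) - m)^2) < m).card : ℝ)
          ≤ (T.card : ℝ) * C := by exact_mod_cast hmain
        _ ≤ (Real.sqrt m / 4 + 1) * C := by nlinarith
        _ ≤ (Real.sqrt m / 2) * C := by nlinarith
        _ ≤ 2^m / 2 := by nlinarith
        _ = 2^(m-1) := by
            rw [show (2:ℝ)^m = 2^(m-1) * 2 by rw [← pow_succ]; congr 1; omega]
            ring
    rw [show ((2:ℝ)^(m-1)) = ((2^(m-1) : ℕ) : ℝ) by push_cast; ring] at hfinal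
    exact_mod_cast hfinal

section TwoPoint

variable {α : Type*} [MeasurableSpace α] [MeasurableSingletonClass α]

lemma two_point_prob (a b : α) :
    IsProbabilityMeasure ((2⁻¹ : ENNReal) • Measure.dirac a + (2⁻¹ : ENNReal) • Measure.dirac b) := by
  constructor
  simp [ENNReal.inv_two_add_inv_two]

lemma two_point_integral (a b : α) (g : α → ℝ) :
    ∫ x, g x ∂((2⁻¹ : ENNReal) • Measure.dirac a + (2⁻¹ : ENNReal) • Measure.dirac b)
      = (g a + g b) / 2 := by
  have h : ∀ c : α, Integrable g (Measure.dirac c) := by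
    intro c
    have hc : g =ᵐ[Measure.dirac c] fun _ => g c := by
      rw [ae_dirac_eq]; exact Filter.eventually_pure.mpr rfl
    exact (integrable_congr hc).mpr (integrable_const _)
  rw [integral_add_measure ((h a).smul_measure (by norm_num)) ((h b).smul_measure (by norm_num)),
    integral_smul_measure, integral_smul_measure, integral_dirac, integral_dirac]
  simp [ENNReal.toReal_inv]
  ring

lemma two_point_ae (a b : α) (P : α → Prop) (ha : P a) (hb : P b) :
    ∀ᵐ x ∂((2⁻¹ : ENNReal) • Measure.dirac a + (2⁻¹ : ENNReal) • Measure.dirac b), P x := by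
  rw [ae_add_measure_iff]
  exact ⟨Measure.ae_smul_measure (by rw [ae_dirac_eq]; exact Filter.eventually_pure.mpr ha) _,
    Measure.ae_smul_measure (by rw [ae_dirac_eq]; exact Filter.eventually_pure.mpr hb) _⟩

lemma two_point_singleton (a b : α) (hab : a ≠ b) :
    ((2⁻¹ : ENNReal) • Measure.dirac a + (2⁻¹ : ENNReal) • Measure.dirac b) {a} = 2⁻¹ ∧
    ((2⁻¹ : ENNReal) • Measure.dirac a + (2⁻¹ : ENNReal) • Measure.dirac b) {b} = 2⁻¹ := by
  constructor <;>
  · simp only [Measure.add_apply, Measure.smul_apply, smul_eq_mul]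
    rw [Measure.dirac_apply' _ (measurableSet_singleton _),
      Measure.dirac_apply' _ (measurableSet_singleton _)]
    simp [Set.indicator, hab, hab.symm]

lemma pi_measure_image (m : ℕ) [DecidableEq (Fin m → α)] (a b : α) (hab : a ≠ b)
    (G : Finset (Fin m → Bool)) :
    (G.card : ENNReal) * (2⁻¹ : ENNReal)^m ≤
      (Measure.pi fun _ : Fin m =>
        ((2⁻¹ : ENNReal) • Measure.dirac a + (2⁻¹ : ENNReal) • Measure.dirac b))
        ↑(G.image fun v => fun i => if v i then b else a) := by
  classical
  haveI := two_point_prob a b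
  set D : Measure α := (2⁻¹ : ENNReal) • Measure.dirac a + (2⁻¹ : ENNReal) • Measure.dirac b
  set g : (Fin m → Bool) → (Fin m → α) := fun v => fun i => if v i then b else a with hg
  have hginj : Function.Injective g := by
    intro v w h
    funext i
    have := congrFun h i
    simp only [hg] at this
    cases hv : v i <;> cases hw : w i <;> simp [hv, hw] at this ⊢
    · exact absurd this.symm hab.symm
    · exact absurd this hab.symm
  have hcoe : (↑(G.image g) : Set (Fin m → α)) = ⋃ x ∈ (G.image g), ({x} : Set (Fin m → α)) := by
    ext x; simp [eq_comm]
  rw [hcoe, measure_biUnion_finset ?hd (fun x _ => measurableSet_singleton x)]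
  case hd =>
    intro x _ y _ hxy
    simp [Set.disjoint_singleton, hxy]
  have hsing : ∀ x ∈ G.image g,
      (Measure.pi fun _ : Fin m => D) {x} = (2⁻¹ : ENNReal)^m := by
    intro x hx
    obtain ⟨v, _, rfl⟩ := Finset.mem_image.mp hx
    rw [← Set.univ_pi_singleton (g v), Measure.pi_pi]
    have : ∀ i, D {g v i} = 2⁻¹ := by
      intro i
      simp only [hg]
      cases hv : v i <;> simp only [if_pos, if_neg, Bool.false_eq_true, if_false, if_true]
      · exact (two_point_singleton a b hab).1
      · exact (two_point_singleton a b hab).2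
    rw [Finset.prod_congr rfl (fun i _ => this i), Finset.prod_const, Finset.card_univ,
      Fintype.card_fin]
  rw [Finset.sum_congr rfl hsing, Finset.sum_const, Finset.card_image_of_injective _ hginj,
    nsmul_eq_mul]

end TwoPoint

/-- Uniform convergence lower bound for the Winnow loss: for `k ≥ 1` and `θ ≤ k/2` there is
a distribution `D` on `{0,1}^{k²+1} × {±1}` putting all mass on the label `−1`, whose best
achievable loss over `H = {w ≥ 0 : ‖w‖₁ ≤ k}` equals `[1/2 − θ]₊`, and a constant `c > 0`,
such that with probability at least `1/2` over samples of any size `m`, some `w ∈ H` has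
empirical loss deviating from its true loss by at least `c·sqrt(k²/m)`. -/
theorem stmt14 (k : ℕ) (hk : 1 ≤ k) (θ : ℝ) (hθ : θ ≤ (k : ℝ) / 2) :
    ∃ D : Measure ((Fin (k ^ 2 + 1) → ℝ) × ℝ), ∃ _ : IsProbabilityMeasure D, ∃ c : ℝ,
      0 < c ∧
      (∀ᵐ p ∂D, p.2 = -1 ∧ ∀ j, p.1 j = 0 ∨ p.1 j = 1) ∧
      IsLeast {v : ℝ | ∃ w : Fin (k ^ 2 + 1) → ℝ, (∀ j, 0 ≤ w j) ∧ (∑ j, |w j|) ≤ k ∧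
          v = ∫ p, max 0 (1 / 2 - p.2 * ((∑ j, w j * p.1 j) - θ)) ∂D}
        (max 0 (1 / 2 - θ)) ∧
      ∀ m : ℕ, 0 < m →
        (1 / 2 : ENNReal) ≤ (Measure.pi fun _ : Fin m => D)
          {S | ∃ w : Fin (k ^ 2 + 1) → ℝ, (∀ j, 0 ≤ w j) ∧ (∑ j, |w j|) ≤ k ∧
            c * Real.sqrt ((k ^ 2 : ℝ) / m) ≤
              |(∑ i, max 0 (1 / 2 - (S i).2 * ((∑ j, w j * (S i).1 j) - θ))) / m -
                ∫ p, max 0 (1 / 2 - p.2 * ((∑ j, w j * p.1 j) - θ)) ∂D|} := by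
  classical
  set α := (Fin (k ^ 2 + 1) → ℝ) × ℝ
  set x₁ : Fin (k ^ 2 + 1) → ℝ := fun j => if j = 0 then 1 else 0 with hx₁
  set p₀ : α := (fun _ => 0, -1) with hp₀
  set p₁ : α := (x₁, -1) with hp₁
  have hab : p₀ ≠ p₁ := by
    intro h
    have := congrFun (congrArg Prod.fst h) 0
    simp [hp₀, hp₁, hx₁] at this
  set D : Measure α := (2⁻¹ : ENNReal) • Measure.dirac p₀ + (2⁻¹ : ENNReal) • Measure.dirac p₁
    with hD
  have hk1 : (1:ℝ) ≤ k := by exact_mod_cast hk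
  set a : ℝ := max 0 (1 / 2 - θ) with ha
  set B : ℝ := 1 / 2 + (k:ℝ) - θ with hB
  have hBpos : 0 < B := by rw [hB]; linarith
  have hBa : (k:ℝ)/2 ≤ B - a := by
    rcases le_or_gt θ (1/2) with h | h
    · have h' : a = 1/2 - θ := max_eq_right (by linarith)
      rw [h', hB]; linarith
    · have h' : a = 0 := max_eq_left (by linarith)
      rw [h', hB]; linarith
  have hBa0 : (0:ℝ) ≤ B - a := le_trans (by positivity) hBa
  -- value of the loss at the all-zero point
  have hloss₀ : ∀ w : Fin (k ^ 2 + 1) → ℝ,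
      max 0 (1 / 2 - p₀.2 * ((∑ j, w j * p₀.1 j) - θ)) = a := by
    intro w
    rw [ha]
    congr 1
    rw [show (∑ j, w j * p₀.1 j) = 0 by rw [hp₀]; simp]
    show (1:ℝ)/2 - (-1) * (0 - θ) = 1/2 - θ
    ring
  have hsum₁ : ∀ w : Fin (k ^ 2 + 1) → ℝ, (∑ j, w j * x₁ j) = w 0 := by
    intro w
    rw [hx₁]
    simp [mul_ite]
  -- value of the loss at the point x₁
  have hloss₁ : ∀ w : Fin (k ^ 2 + 1) → ℝ,
      max 0 (1 / 2 - p₁.2 * ((∑ j, w j * p₁.1 j) - θ)) = max 0 (1/2 + w 0 - θ) := by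
    intro w
    congr 1
    show (1:ℝ)/2 - (-1) * ((∑ j, w j * x₁ j) - θ) = 1/2 + w 0 - θ
    rw [hsum₁ w]
    ring
  refine ⟨D, two_point_prob p₀ p₁, 1/16, by norm_num, ?_, ?_, ?_⟩
  · -- almost sure support
    apply two_point_ae
    · exact ⟨rfl, fun j => Or.inl rfl⟩
    · refine ⟨rfl, fun j => ?_⟩
      show x₁ j = 0 ∨ x₁ j = 1
      rw [hx₁]
      by_cases h : j = 0 <;> simp [h]
  · -- IsLeast
    constructor
    · refine ⟨fun _ => 0, fun j => le_rfl, by simpa using (by positivity : (0:ℝ) ≤ k), ?_⟩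
      rw [hD, two_point_integral, hloss₀, hloss₁]
      have : max 0 (1/2 + (0:ℝ) - θ) = a := by rw [ha]; norm_num
      rw [this, ha]
      ring
    · rintro v ⟨w, hw0, hwsum, rfl⟩
      rw [hD, two_point_integral, hloss₀, hloss₁]
      have h₂ : a ≤ max 0 (1/2 + w 0 - θ) := by
        rw [ha]
        exact max_le_max le_rfl (by linarith [hw0 0])
      rw [ha] at h₂ ⊢
      linarith
  · -- main deviation bound
    intro m hm
    haveI := two_point_prob p₀ p₁
    set E : Set (Fin m → α) :=
        {S : Fin m → α | ∃ w : Fin (k ^ 2 + 1) → ℝ, (∀ j, 0 ≤ w j) ∧ (∑ j, |w j|) ≤ k ∧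
          (1/16 : ℝ) * Real.sqrt ((k ^ 2 : ℝ) / m) ≤
            |(∑ i, max 0 (1 / 2 - (S i).2 * ((∑ j, w j * (S i).1 j) - θ))) / m -
              ∫ p, max 0 (1 / 2 - p.2 * ((∑ j, w j * p.1 j) - θ)) ∂D|} with hE
    show (1 / 2 : ENNReal) ≤ (Measure.pi fun _ : Fin m => D) E
    set G : Finset (Fin m → Bool) :=
      Finset.univ.filter (fun b =>
        ¬ (16*((2*(((Finset.univ.filter fun i => b i = true).card : ℤ)) - m)^2) < m)) with hG
    -- cardinality of G
    have hGcard : 2^(m-1) ≤ G.card := by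
      have h1 := count_main m hm
      rw [hG, Finset.filter_not, Finset.card_sdiff_of_subset (Finset.filter_subset _ _)]
      have h3 : (Finset.univ : Finset (Fin m → Bool)).card = 2^m := by
        rw [Finset.card_univ]
        simp [Fintype.card_fun]
      generalize hA : (Finset.univ.filter fun b : Fin m → Bool =>
        16*((2*(((Finset.univ.filter fun i => b i = true).card : ℤ)) - m)^2) < m).card = A
        at h1 ⊢
      clear hA
      rw [h3]
      have h4 : (2:ℕ)^m = 2^(m-1) + 2^(m-1) := by
        rw [← two_mul, ← pow_succ']
        congr 1
        omega
      omega
    -- pointwise claim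
    have hpoint : ∀ v ∈ G, (fun i => if v i then p₁ else p₀) ∈ E := by
      intro v hv
      rw [hG, Finset.mem_filter, not_lt] at hv
      have hvZ : (m:ℤ) ≤ 16*((2*(((Finset.univ.filter fun i => v i = true).card : ℤ)) - m)^2) :=
        hv.2
      rw [hE]
      set w : Fin (k ^ 2 + 1) → ℝ := fun j => if j = 0 then (k:ℝ) else 0 with hw
      have hw0 : ∀ j, 0 ≤ w j := by
        intro j; rw [hw]; by_cases h : j = 0 <;> simp [h]
      have hwsum : (∑ j, |w j|) ≤ (k:ℝ) := by
        rw [hw]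
        simp only [apply_ite abs, abs_zero]
        rw [Finset.sum_ite_eq' Finset.univ 0 (fun _ => |(k:ℝ)|)]
        simp [abs_of_nonneg (show (0:ℝ) ≤ k by positivity)]
      refine ⟨w, hw0, hwsum, ?_⟩
      have hw0val : w 0 = (k:ℝ) := by rw [hw]; simp
      have hlossB : max 0 (1 / 2 - p₁.2 * ((∑ j, w j * p₁.1 j) - θ)) = B := by
        rw [hloss₁ w, hw0val, hB]
        exact max_eq_right (by linarith)
      have hterm : ∀ i, max 0 (1 / 2 - ((if v i then p₁ else p₀) : α).2 *
          ((∑ j, w j * ((if v i then p₁ else p₀) : α).1 j) - θ)) = if v i then B else a := by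
        intro i
        by_cases hvi : v i = true
        · rw [if_pos hvi, if_pos hvi, hlossB]
        · rw [if_neg hvi, if_neg hvi, hloss₀]
      set t : ℕ := (Finset.univ.filter fun i => v i = true).card with htdef
      set u : ℕ := (Finset.univ.filter fun i => ¬ v i = true).card with hudef
      have htu : t + u = m := by
        have h5 := Finset.card_filter_add_card_filter_not
          (s := (Finset.univ : Finset (Fin m))) (fun i : Fin m => v i = true)
        rw [htdef, hudef, h5, Finset.card_univ, Fintype.card_fin]
      have hsumS : (∑ i, max 0 (1 / 2 - ((if v i then p₁ else p₀) : α).2 *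
          ((∑ j, w j * ((if v i then p₁ else p₀) : α).1 j) - θ))) = t * B + u * a := by
        rw [Finset.sum_congr rfl (fun i _ => hterm i), Finset.sum_ite]
        simp only [Finset.sum_const, smul_eq_mul]
        rw [htdef, hudef]
        push_cast
        ring
      have hint : (∫ p, max 0 (1 / 2 - p.2 * ((∑ j, w j * p.1 j) - θ)) ∂D) = (a + B)/2 := by
        rw [hD, two_point_integral, hloss₀, hlossB]
      rw [hsumS, hint]
      -- numeric inequality
      have hm0 : (0:ℝ) < m := by exact_mod_cast hm
      have hu : (u:ℝ) = m - t := by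
        have h6 : (t:ℝ) + u = m := by exact_mod_cast htu
        linarith
      have heq : ((t:ℝ) * B + u * a) / m - (a + B)/2 = ((2*t - m)*(B - a))/(2*m) := by
        rw [hu]; field_simp; ring
      rw [heq, abs_div, abs_mul, abs_of_nonneg hBa0, abs_of_pos (by linarith : (0:ℝ) < 2*m)]
      have hsq : Real.sqrt ((k:ℝ) ^ 2 / m) = (k:ℝ) / Real.sqrt m := by
        rw [Real.sqrt_div (by positivity) _, Real.sqrt_sq (by positivity)]
      rw [hsq]
      set s : ℝ := Real.sqrt m with hs
      have hspos : 0 < s := Real.sqrt_pos.mpr hm0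
      have hss : s * s = m := Real.mul_self_sqrt (le_of_lt hm0)
      have hq : s / 4 ≤ |2*(t:ℝ) - m| := by
        have hZR : (m:ℝ) ≤ 16*((2*(t:ℝ) - m)^2) := by exact_mod_cast hvZ
        have h7 : s ≤ Real.sqrt (16*((2*(t:ℝ) - m)^2)) := Real.sqrt_le_sqrt hZR
        rw [Real.sqrt_mul (by norm_num) _, Real.sqrt_sq_eq_abs,
          show (16:ℝ) = 4^2 by norm_num, Real.sqrt_sq (by norm_num)] at h7
        linarith
      have hprod : (s/4) * ((k:ℝ)/2) ≤ |2*(t:ℝ) - m| * (B - a) :=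
        mul_le_mul hq hBa (by positivity) (abs_nonneg _)
      calc (1/16 : ℝ) * ((k:ℝ) / s) = ((s/4) * ((k:ℝ)/2)) / (2*(s*s)) := by
            field_simp; ring
        _ ≤ (|2*(t:ℝ) - m| * (B - a)) / (2*(s*s)) :=
            (div_le_div_iff_of_pos_right (by positivity)).mpr hprod
        _ = |2*(t:ℝ) - m| * (B - a) / (2*m) := by rw [hss]
    -- assemble measure bound
    have himg : (↑(G.image fun v => fun i => if v i then p₁ else p₀) : Set (Fin m → α)) ⊆ E := by
      intro x hx
      obtain ⟨v, hvG, rfl⟩ := Finset.mem_image.mp (by exact_mod_cast hx)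
      exact hpoint v hvG
    refine le_trans ?_ (le_trans (pi_measure_image m p₀ p₁ hab G) (measure_mono himg))
    have hpow : ((2:ENNReal)^(m-1)) * (2⁻¹ : ENNReal)^m = 2⁻¹ := by
      have hne0 : ((2:ENNReal)^(m-1)) ≠ 0 := by positivity
      have hnetop : ((2:ENNReal)^(m-1)) ≠ ⊤ := ENNReal.pow_ne_top (by norm_num)
      obtain ⟨n, rfl⟩ : ∃ n, m = n + 1 := ⟨m - 1, by omega⟩
      simp only [Nat.add_sub_cancel] at hne0 hnetop ⊢
      rw [← ENNReal.inv_pow, pow_succ,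
        ENNReal.mul_inv (Or.inl hne0) (Or.inl hnetop), ← mul_assoc,
        ENNReal.mul_inv_cancel hne0 hnetop, one_mul]
    have hcast : ((2:ENNReal)^(m-1)) ≤ (G.card : ENNReal) := by
      rw [show ((2:ENNReal)^(m-1)) = ((2^(m-1) : ℕ) : ENNReal) by push_cast; ring]
      exact_mod_cast hGcard
    calc (1/2 : ENNReal) = 2⁻¹ := by rw [one_div]
      _ = ((2:ENNReal)^(m-1)) * (2⁻¹ : ENNReal)^m := hpow.symm
      _ ≤ (G.card : ENNReal) * (2⁻¹ : ENNReal)^m := by gcongr
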